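/- Let $b > 0$, $p = e^b$, $q = p/(p-1)$, $C_b = p^{1-q}/q$, and $a \ge 0$. For any $k$ with $0 \le k < 1/(4a)$ (any $k \ge 0$ if $a = 0$), the functions $\alpha(s) = \frac{kb}{e^{bs} - 4ak}$ and $\beta(s) = \beta_0 e^{-bs}$ satisfy $\alpha'(s) + 4a\alpha(s)^2 + b\alpha(s) = 0$ and $\beta'(s) + b\beta(s) = 0$ on $[0,1]$, and consequently for a $1$-Lipschitz bounded $f$ with $|\nabla f| \le 1$, the function $\varphi_s = \exp(\alpha(s) f^2 + \beta(s))$ satisfies $\partial_s \varphi_s + a \varphi_s |\nabla \ln \varphi_s|^2 + b \varphi_s \ln \varphi_s \le 0$. -/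

import Mathlib

open Filter

/-- The local Lipschitz slope `|∇f|(x) = limsup_{y → x} |f(x) - f(y)|/d(x,y)`. -/
noncomputable def lipSlope {X : Type*} [MetricSpace X] (f : X → ℝ) (x : X) : ℝ :=
  Filter.limsup (fun y => |f x - f y| / dist x y) (nhdsWithin x {x}ᶜ)

/-- If `|g x - g y| ≤ (c + K d(x,y)) d(x,y)` for all `y`, then the slope at `x`
is between `0` and `c`. -/
lemma lipSlope_mem_Icc {X : Type*} [MetricSpace X] (g : X → ℝ) (x : X) (c K : ℝ)
    (hc : 0 ≤ c)
    (h : ∀ y, |g x - g y| ≤ (c + K * dist x y) * dist x y) :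
    0 ≤ lipSlope g x ∧ lipSlope g x ≤ c := by
  set F := nhdsWithin x {x}ᶜ with hF
  set u : X → ℝ := fun y => |g x - g y| / dist x y with hu
  by_cases hbot : F = ⊥
  · have : lipSlope g x = 0 := by
      rw [lipSlope, ← hF, hbot, limsup_eq]
      have : {a | ∀ᶠ n in (⊥ : Filter X), u n ≤ a} = Set.univ := by
        ext a; simp
      rw [this]
      exact Real.sInf_of_not_bddBelow not_bddBelow_univ
    rw [this]; exact ⟨le_refl 0, hc⟩
  · haveI : F.NeBot := ⟨hbot⟩
    have hmem : ∀ᶠ y in F, y ≠ x := by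
      filter_upwards [self_mem_nhdsWithin] with y hy
      simpa using hy
    have hu_nonneg : ∀ y, 0 ≤ u y := fun y => div_nonneg (abs_nonneg _) dist_nonneg
    have hu_le : ∀ᶠ y in F, u y ≤ c + K * dist x y := by
      filter_upwards [hmem] with y hy
      have hd : 0 < dist x y := dist_pos.mpr (fun hxy => hy hxy.symm)
      rw [hu, div_le_iff₀ hd]
      exact h y
    have hv : Tendsto (fun y => c + K * dist x y) F (nhds c) := by
      have h1 : Tendsto (fun y => dist x y) F (nhds 0) := by
        have := (tendsto_const_nhds (x := x) (f := nhds x)).dist tendsto_id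
        simp only [dist_self] at this
        exact this.mono_left nhdsWithin_le_nhds
      have := (tendsto_const_nhds (x := c) (f := F)).add ((h1.const_mul K))
      simpa using this
    have hvb : IsBoundedUnder (· ≤ ·) F (fun y => c + K * dist x y) :=
      hv.isBoundedUnder_le
    have hub : IsBoundedUnder (· ≤ ·) F u :=
      hvb.mono_le hu_le
    have hcob : IsCoboundedUnder (· ≤ ·) F u :=
      isCoboundedUnder_le_of_le F hu_nonneg
    constructor
    · exact le_limsup_of_frequently_le ((Eventually.of_forall hu_nonneg).frequently) hub
    · calc limsup u F ≤ limsup (fun y => c + K * dist x y) F :=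
            limsup_le_limsup hu_le hcob hvb
        _ = c := hv.limsup_eq

theorem stmt_16 {X : Type*} [MetricSpace X]
    (a b k β₀ : ℝ) (ha : 0 ≤ a) (hb : 0 < b) (hk : 0 ≤ k) (hak : 4 * a * k < 1)
    (α β : ℝ → ℝ)
    (hα : α = fun s => k * b / (Real.exp (b * s) - 4 * a * k))
    (hβ : β = fun s => β₀ * Real.exp (-b * s))
    (f : X → ℝ) (hfLip : LipschitzWith 1 f) (hfbd : ∃ M, ∀ x, |f x| ≤ M)
    (hfslope : ∀ x, lipSlope f x ≤ 1)
    (φ : ℝ → X → ℝ)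
    (hφ : φ = fun s x => Real.exp (α s * f x ^ 2 + β s)) :
    (∀ s ∈ Set.Icc (0:ℝ) 1, deriv α s + 4 * a * α s ^ 2 + b * α s = 0) ∧
    (∀ s ∈ Set.Icc (0:ℝ) 1, deriv β s + b * β s = 0) ∧
    (∀ s ∈ Set.Icc (0:ℝ) 1, ∀ x : X,
      deriv (fun u => φ u x) s +
          a * φ s x * (lipSlope (fun z => Real.log (φ s z)) x) ^ 2 +
          b * φ s x * Real.log (φ s x) ≤ 0) := by
  -- denominator is positive on [0,1]
  have hden : ∀ s : ℝ, s ∈ Set.Icc (0:ℝ) 1 → 0 < Real.exp (b * s) - 4 * a * k := by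
    intro s hs
    have h1 : (1:ℝ) ≤ Real.exp (b * s) :=
      Real.one_le_exp (mul_nonneg hb.le hs.1)
    linarith
  -- derivative of α
  have hαderiv : ∀ s ∈ Set.Icc (0:ℝ) 1,
      HasDerivAt α (-(k * b * (b * Real.exp (b * s))) /
        (Real.exp (b * s) - 4 * a * k) ^ 2) s := by
    intro s hs
    have hne : Real.exp (b * s) - 4 * a * k ≠ 0 := (hden s hs).ne'
    have hd : HasDerivAt (fun s => Real.exp (b * s) - 4 * a * k)
        (b * Real.exp (b * s)) s := by
      have : HasDerivAt (fun s : ℝ => b * s) b s := by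
        simpa using (hasDerivAt_id s).const_mul b
      simpa [mul_comm] using (this.exp.sub_const (4 * a * k))
    have := (hasDerivAt_const s (k * b)).div hd hne
    rw [hα]
    exact (this : HasDerivAt (fun s => k * b / (Real.exp (b * s) - 4 * a * k)) _ s).congr_deriv (by ring)
  have hβderiv : ∀ s : ℝ, HasDerivAt β (β₀ * (-b * Real.exp (-b * s))) s := by
    intro s
    have h1 : HasDerivAt (fun s : ℝ => -b * s) (-b) s := by
      simpa using (hasDerivAt_id s).const_mul (-b)
    rw [hβ]
    simpa [mul_comm, mul_left_comm] using (h1.exp.const_mul β₀)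
  have hα1 : ∀ s ∈ Set.Icc (0:ℝ) 1, deriv α s + 4 * a * α s ^ 2 + b * α s = 0 := by
    intro s hs
    rw [(hαderiv s hs).deriv, hα]
    have hne : Real.exp (b * s) - 4 * a * k ≠ 0 := (hden s hs).ne'
    field_simp
    ring
  have hβ1 : ∀ s ∈ Set.Icc (0:ℝ) 1, deriv β s + b * β s = 0 := by
    intro s _
    rw [(hβderiv s).deriv, hβ]
    ring
  refine ⟨hα1, hβ1, ?_⟩
  intro s hs x
  have hαnn : 0 ≤ α s := by
    rw [hα]
    exact div_nonneg (mul_nonneg hk hb.le) (hden s hs).le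
  set E := Real.exp (α s * f x ^ 2 + β s) with hE
  have hEpos : 0 < E := Real.exp_pos _
  have hA := hαderiv s hs
  have hA' : HasDerivAt α (deriv α s) s := hA.differentiableAt.hasDerivAt
  have hB' : HasDerivAt β (deriv β s) s := (hβderiv s).differentiableAt.hasDerivAt
  -- derivative in s of φ · x
  have hφx : HasDerivAt (fun u => φ u x)
      (E * (deriv α s * f x ^ 2 + deriv β s)) s := by
    rw [hφ]
    exact ((hA'.mul_const _).add hB').exp
  -- the function ln φ_s
  have hlog : (fun z => Real.log (φ s z)) = fun z => α s * f z ^ 2 + β s := by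
    funext z
    rw [hφ, Real.log_exp]
  -- slope bound
  have hslope := lipSlope_mem_Icc (fun z => α s * f z ^ 2 + β s) x
      (2 * α s * |f x|) (α s)
      (by positivity) ?_
  · have hsq : (lipSlope (fun z => Real.log (φ s z)) x) ^ 2
        ≤ 4 * α s ^ 2 * f x ^ 2 := by
      rw [hlog]
      have := pow_le_pow_left₀ hslope.1 hslope.2 2
      calc (lipSlope (fun z => α s * f z ^ 2 + β s) x) ^ 2
          ≤ (2 * α s * |f x|) ^ 2 := this
        _ = 4 * α s ^ 2 * f x ^ 2 := by rw [mul_pow, mul_pow, sq_abs]; ring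
    have hA0 : deriv α s = -(4 * a * α s ^ 2 + b * α s) := by
      have := hα1 s hs; linarith
    have hB0 : deriv β s = -(b * β s) := by
      have := hβ1 s hs; linarith
    have hlogφ : Real.log (φ s x) = α s * f x ^ 2 + β s := by
      rw [hφ, Real.log_exp]
    have hφsx : φ s x = E := by rw [hφ]
    rw [hφx.deriv, hlogφ, hφsx, hA0, hB0]
    nlinarith [mul_le_mul_of_nonneg_left hsq (mul_nonneg ha hEpos.le)]
  · -- pointwise Lipschitz-type bound for α s * f² + β s
    intro y
    have h1 : |f x - f y| ≤ dist x y := by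
      have := hfLip.dist_le_mul x y
      simpa [Real.dist_eq] using this
    have h2 : |f x + f y| ≤ 2 * |f x| + dist x y := by
      have : |f y| ≤ |f x| + |f x - f y| := by
        calc |f y| = |f x - (f x - f y)| := by ring_nf
          _ ≤ |f x| + |f x - f y| := abs_sub _ _
      calc |f x + f y| ≤ |f x| + |f y| := abs_add_le _ _
        _ ≤ 2 * |f x| + dist x y := by linarith
    have heq : (α s * f x ^ 2 + β s) - (α s * f y ^ 2 + β s)
        = α s * ((f x - f y) * (f x + f y)) := by ring
    calc |(α s * f x ^ 2 + β s) - (α s * f y ^ 2 + β s)|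
        = α s * (|f x - f y| * |f x + f y|) := by
          rw [heq, abs_mul, abs_mul, abs_of_nonneg hαnn]
      _ ≤ α s * (dist x y * (2 * |f x| + dist x y)) := by
          apply mul_le_mul_of_nonneg_left _ hαnn
          exact mul_le_mul h1 h2 (abs_nonneg _) dist_nonneg
      _ = (2 * α s * |f x| + α s * dist x y) * dist x y := by ring
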